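/- Define f(θ) = ∫₀^{|θ|} √(cos φ) dφ for θ ∈ (−π/2, π/2). Let u ∈ H²(a, b) satisfy u'(x₀) = 0 for some x₀ ∈ (a, b). Then the total squared curvature of the graph of u satisfies ∫ₐᵇ |u''|²/(1+u'²)^{5/2} dx ≥ [f(arctan u'(a)) + f(arctan u'(b))]²/(b−a). -/

import Mathlib

open MeasureTheory Real Set

noncomputable section

/-- f(θ) = ∫₀^{|θ|} √(cos φ) dφ. -/
def fAngle (θ : ℝ) : ℝ := ∫ φ in (0:ℝ)..|θ|, Real.sqrt (Real.cos φ)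

namespace CurvAux

def g (t : ℝ) : ℝ := (1 + t ^ 2) ^ (-(5/4) : ℝ)

lemma one_add_sq_pos (t : ℝ) : (0:ℝ) < 1 + t ^ 2 := by positivity

lemma g_pos (t : ℝ) : 0 < g t := Real.rpow_pos_of_pos (one_add_sq_pos t) _

lemma g_cont : Continuous g := by
  apply Continuous.rpow_const (by continuity)
  intro t; exact Or.inl (one_add_sq_pos t).ne'

def G (w : ℝ) : ℝ := ∫ t in (0:ℝ)..w, g t

lemma G_sub (c d : ℝ) : G d - G c = ∫ t in c..d, g t := by
  rw [G, G, ← intervalIntegral.integral_interval_sub_left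
    (g_cont.intervalIntegrable 0 d) (g_cont.intervalIntegrable 0 c)]

lemma G_zero : G 0 = 0 := intervalIntegral.integral_same

lemma G_neg (w : ℝ) : G (-w) = - G w := by
  have h : (∫ x in (0:ℝ)..w, g (-x)) = ∫ x in (-w)..(-0:ℝ), g x :=
    intervalIntegral.integral_comp_neg g
  simp only [neg_zero] at h
  have h2 : (∫ x in (0:ℝ)..w, g (-x)) = G w := by
    rw [G]; congr 1; ext x; rw [g, g]; ring_nf
  have h3 : (∫ x in (-w)..(0:ℝ), g x) = G 0 - G (-w) := (G_sub _ _).symm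
  rw [h2, h3, G_zero] at h
  linarith

lemma G_nonneg {w : ℝ} (hw : 0 ≤ w) : 0 ≤ G w :=
  intervalIntegral.integral_nonneg hw (fun t _ => (g_pos t).le)

lemma G_abs (w : ℝ) : G |w| = |G w| := by
  rcases le_or_gt 0 w with h | h
  · rw [abs_of_nonneg h, abs_of_nonneg (G_nonneg h)]
  · rw [abs_of_neg h]
    have : G w = -G (-w) := by rw [G_neg]; ring
    rw [this, abs_neg, abs_of_nonneg (G_nonneg (by linarith))]

lemma cos_rpow_two (x : ℝ) : Real.cos x ^ (2:ℝ) = Real.cos x ^ 2 := by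
  rw [show (2:ℝ) = ((2:ℕ):ℝ) by norm_num, Real.rpow_natCast]

lemma sqrt_cos_eq {x : ℝ} (hx : 0 < Real.cos x) :
    Real.sqrt (Real.cos x) = (1 / Real.cos x ^ 2) * g (Real.tan x) := by
  have h1 : (1:ℝ) + Real.tan x ^ 2 = (Real.cos x ^ 2)⁻¹ := by
    rw [← Real.inv_one_add_tan_sq hx.ne', inv_inv]
  have e1 : ((Real.cos x ^ 2)⁻¹ : ℝ) = Real.cos x ^ (-(2:ℝ)) := by
    rw [Real.rpow_neg hx.le, cos_rpow_two]
  rw [g, h1, one_div, e1, ← Real.rpow_mul hx.le, ← Real.rpow_add hx,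
    Real.sqrt_eq_rpow]
  norm_num

lemma integral_sqrt_cos (c : ℝ) :
    (∫ φ in (0:ℝ)..(Real.arctan c), Real.sqrt (Real.cos φ)) = G c := by
  have hmem := Real.arctan_mem_Ioo c
  have hcos : ∀ x ∈ uIcc (0:ℝ) (Real.arctan c), 0 < Real.cos x := by
    intro x hx
    obtain ⟨h1, h2⟩ := Set.mem_uIcc.mp hx
    all_goals {
      apply Real.cos_pos_of_mem_Ioo
      constructor
      · rcases le_total 0 (Real.arctan c) with h | h <;>
          [skip; skip] <;> nlinarith [Real.pi_div_two_pos, hmem.1, hmem.2]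
      · nlinarith [Real.pi_div_two_pos, hmem.1, hmem.2] }
  have hder : ∀ x ∈ uIcc (0:ℝ) (Real.arctan c),
      HasDerivAt Real.tan (1 / Real.cos x ^ 2) x :=
    fun x hx => Real.hasDerivAt_tan (hcos x hx).ne'
  have hcont : ContinuousOn (fun x => 1 / Real.cos x ^ 2)
      (uIcc (0:ℝ) (Real.arctan c)) := by
    apply ContinuousOn.div continuousOn_const (Real.continuous_cos.continuousOn.pow 2)
    exact fun x hx => pow_ne_zero 2 (hcos x hx).ne'
  have hsub := intervalIntegral.integral_comp_smul_deriv hder hcont g_cont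
  rw [Real.tan_zero, Real.tan_arctan] at hsub
  rw [G, ← hsub]
  apply intervalIntegral.integral_congr
  intro x hx
  simp only [Function.comp, smul_eq_mul]
  exact sqrt_cos_eq (hcos x hx)

lemma abs_arctan (t : ℝ) : |Real.arctan t| = Real.arctan |t| := by
  rcases le_or_gt 0 t with h | h
  · rw [abs_of_nonneg h, abs_of_nonneg]
    calc (0:ℝ) = Real.arctan 0 := Real.arctan_zero.symm
      _ ≤ Real.arctan t := (Real.arctan_strictMono.monotone h)
  · have ht : Real.arctan t < 0 := by
      calc Real.arctan t < Real.arctan 0 := Real.arctan_strictMono h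
        _ = 0 := Real.arctan_zero
    rw [abs_of_neg h, abs_of_neg ht, ← Real.arctan_neg]

lemma fAngle_arctan (t : ℝ) : fAngle (Real.arctan t) = G |t| := by
  rw [fAngle, abs_arctan, integral_sqrt_cos]

lemma fAngle_nonneg (θ : ℝ) : 0 ≤ fAngle θ :=
  intervalIntegral.integral_nonneg (abs_nonneg θ) (fun _ _ => Real.sqrt_nonneg _)

lemma ftc_v {v v' : ℝ → ℝ} (hv : ∀ x, HasDerivAt v (v' x) x) (hv' : Continuous v')
    (p q : ℝ) : (∫ x in p..q, v' x * g (v x)) = G (v q) - G (v p) := by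
  have h := intervalIntegral.integral_comp_smul_deriv (a := p) (b := q)
    (f := v) (f' := v') (g := g) (fun x _ => hv x) hv'.continuousOn g_cont
  rw [G_sub]
  simpa [Function.comp, smul_eq_mul] using h

lemma cs {F : ℝ → ℝ} (hF : Continuous F) {a b : ℝ} (hab : a < b) :
    (∫ x in a..b, F x) ^ 2 / (b - a) ≤ ∫ x in a..b, F x ^ 2 := by
  have hba : (0:ℝ) < b - a := sub_pos.mpr hab
  set I := ∫ x in a..b, F x with hI
  set J := ∫ x in a..b, F x ^ 2 with hJ
  have key : ∀ c : ℝ, 2 * c * I - c ^ 2 * (b - a) ≤ J := by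
    intro c
    have h0 : 0 ≤ ∫ x in a..b, (F x - c) ^ 2 :=
      intervalIntegral.integral_nonneg hab.le fun x _ => sq_nonneg _
    have h1 : IntervalIntegrable (fun x => F x ^ 2) volume a b :=
      (hF.pow 2).intervalIntegrable _ _
    have h2 : IntervalIntegrable (fun x => (2 * c) * F x) volume a b :=
      (continuous_const.mul hF).intervalIntegrable _ _
    have hfe : (fun x => (F x - c) ^ 2)
        = fun x => (F x ^ 2 - (2 * c) * F x) + c ^ 2 := by
      funext x; ring
    have hexp : (∫ x in a..b, (F x - c) ^ 2)
        = J - 2 * c * I + (b - a) * c ^ 2 := by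
      rw [hfe, intervalIntegral.integral_add (h1.sub h2) intervalIntegrable_const,
        intervalIntegral.integral_sub h1 h2, intervalIntegral.integral_const_mul,
        intervalIntegral.integral_const, smul_eq_mul, ← hI, ← hJ]
    rw [hexp] at h0
    linarith
  have hkey := key (I / (b - a))
  have hcalc : 2 * (I / (b - a)) * I - (I / (b - a)) ^ 2 * (b - a) = I ^ 2 / (b - a) := by
    field_simp
    ring
  rw [hcalc] at hkey
  exact hkey

end CurvAux

open CurvAux in
/-- Graph version of the curvature lower bound (Lemma 1). -/
theorem graph_curvature_lower_bound (u : ℝ → ℝ) (a b x₀ : ℝ) (hab : a < b)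
    (hu : ContDiff ℝ 2 u) (hx₀ : x₀ ∈ Ioo a b) (h0 : deriv u x₀ = 0) :
    (fAngle (arctan (deriv u a)) + fAngle (arctan (deriv u b))) ^ 2 / (b - a) ≤
      ∫ x in a..b, |deriv (deriv u) x| ^ 2 / (1 + (deriv u x) ^ 2) ^ ((5:ℝ)/2) := by
  obtain ⟨hx₀a, hx₀b⟩ := hx₀
  set v : ℝ → ℝ := deriv u with hv_def
  set w : ℝ → ℝ := deriv (deriv u) with hw_def
  have h2 : ContDiff ℝ (1 + 1) u := by
    convert hu using 2
    exact one_add_one_eq_two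
  have hv1 : ContDiff ℝ 1 v := (contDiff_succ_iff_deriv.mp h2).2.2
  obtain ⟨hvdiff, hwcont⟩ := contDiff_one_iff_deriv.mp hv1
  have hvcont : Continuous v := hvdiff.continuous
  have hvd : ∀ x, HasDerivAt v (w x) x := fun x => (hvdiff x).hasDerivAt
  set F : ℝ → ℝ := fun x => |w x| * g (v x) with hF_def
  have hFcont : Continuous F := hwcont.abs.mul (g_cont.comp hvcont)
  have hFnonneg : ∀ x, 0 ≤ F x := fun x => mul_nonneg (abs_nonneg _) (g_pos _).le
  have hGv0 : G (v x₀) = 0 := by rw [show v x₀ = 0 from h0, G_zero]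
  have piece : ∀ p q : ℝ, p ≤ q → |G (v q) - G (v p)| ≤ ∫ x in p..q, F x := by
    intro p q hpq
    rw [← ftc_v hvd hwcont]
    refine le_trans (intervalIntegral.abs_integral_le_integral_abs hpq) (le_of_eq ?_)
    apply intervalIntegral.integral_congr
    intro x _
    show |w x * g (v x)| = |w x| * g (v x)
    rw [abs_mul, abs_of_pos (g_pos _)]
  have hA : fAngle (arctan (v a)) ≤ ∫ x in a..x₀, F x := by
    calc fAngle (arctan (v a)) = G |v a| := fAngle_arctan _
      _ = |G (v a)| := G_abs _
      _ = |G (v x₀) - G (v a)| := by rw [hGv0, zero_sub, abs_neg]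
      _ ≤ _ := piece a x₀ hx₀a.le
  have hB : fAngle (arctan (v b)) ≤ ∫ x in x₀..b, F x := by
    calc fAngle (arctan (v b)) = G |v b| := fAngle_arctan _
      _ = |G (v b)| := G_abs _
      _ = |G (v b) - G (v x₀)| := by rw [hGv0, sub_zero]
      _ ≤ _ := piece x₀ b hx₀b.le
  have hsplit : (∫ x in a..x₀, F x) + (∫ x in x₀..b, F x) = ∫ x in a..b, F x :=
    intervalIntegral.integral_add_adjacent_intervals
      (hFcont.intervalIntegrable _ _) (hFcont.intervalIntegrable _ _)
  set S := fAngle (arctan (v a)) + fAngle (arctan (v b)) with hS_def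
  have hSI : S ≤ ∫ x in a..b, F x := by
    rw [← hsplit]; exact add_le_add hA hB
  have hS0 : 0 ≤ S := add_nonneg (fAngle_nonneg _) (fAngle_nonneg _)
  have hsq : S ^ 2 ≤ (∫ x in a..b, F x) ^ 2 := pow_le_pow_left₀ hS0 hSI 2
  have hcs := cs hFcont hab
  have hrw : (∫ x in a..b, F x ^ 2)
      = ∫ x in a..b, |w x| ^ 2 / (1 + v x ^ 2) ^ ((5:ℝ)/2) := by
    apply intervalIntegral.integral_congr
    intro x _
    have hpos := one_add_sq_pos (v x)
    have hgsq : g (v x) ^ 2 = ((1 + v x ^ 2) ^ ((5:ℝ)/2))⁻¹ := by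
      rw [g, ← Real.rpow_natCast ((1 + v x ^ 2) ^ (-(5/4) : ℝ)) 2,
        ← Real.rpow_mul hpos.le, ← Real.rpow_neg hpos.le]
      norm_num
    show (|w x| * g (v x)) ^ 2 = _
    rw [mul_pow, hgsq]
    ring
  have hba : (0:ℝ) < b - a := sub_pos.mpr hab
  have h1 : S ^ 2 / (b - a) ≤ (∫ x in a..b, F x) ^ 2 / (b - a) := by
    gcongr
  rw [← hrw]
  exact h1.trans hcs

end
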